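/- Let x be a real number with 0 < x, let a be the least natural number such that 2^a · x > 1/2, and let b be the least natural number such that 3^b · x > 1/2 (both exist since x > 0). Then |a · Real.log 2 − b · Real.log 3| < Real.log 3. (This is the precise form of the approximate relation b = a · log 3 / log 2 between the horizontal and vertical escape times from a neighborhood of 0 used in the analysis of shadow concentrations.) -/
import Mathlib


open MeasureTheory

noncomputable section

/-- The circle `[0,1]` with endpoints identified. -/
abbrev 𝕋 := AddCircle (1 : ℝ)

instance : IsProbabilityMeasure (volume : Measure 𝕋) :=
  ⟨by simp [AddCircle.measure_univ]⟩

/-- The doubling map. -/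
def T (x : 𝕋) : 𝕋 := 2 • x

/-- The tripling map. -/
def S (x : 𝕋) : 𝕋 := 3 • x

/-- A set is invariant if it is forward invariant under both `T` and `S`. -/
def Invariant (O : Set 𝕋) : Prop := T '' O ⊆ O ∧ S '' O ⊆ O

/-- A nonempty finite invariant set is minimal if every nonempty invariant subset equals it. -/
def MinimalInvariant (O : Set 𝕋) : Prop :=
  O.Nonempty ∧ O.Finite ∧ Invariant O ∧
    ∀ O' ⊆ O, O'.Nonempty → Invariant O' → O' = O

/-- A measure is invariant if both `T` and `S` are measure preserving for it. -/
def InvariantMeasure (μ : Measure 𝕋) : Prop :=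
  MeasurePreserving T μ μ ∧ MeasurePreserving S μ μ

/-- The normalized counting measure on a set: each point of a finite set `O`
gets mass `1 / |O|`. -/
def normCount (O : Set 𝕋) : Measure 𝕋 :=
  (O.ncard : ENNReal)⁻¹ • Measure.count.restrict O

/-- `Fn n` is the set of points `i/n` of the circle with `0 < i < n`. -/
def Fn (n : ℕ) : Set 𝕋 := {x : 𝕋 | ∃ i : ℕ, 0 < i ∧ i < n ∧ x = ((i : ℝ) / n : ℝ)}

/-- If `a` and `b` are the least exponents with `2^a·x > 1/2` and `3^b·x > 1/2`
respectively (for `x > 0`), then `a·log 2` and `b·log 3` differ by less than `log 3`. -/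
theorem escape_times_relation (x : ℝ) (hx : 0 < x) (a b : ℕ)
    (ha : IsLeast {m : ℕ | 1 / 2 < (2 : ℝ) ^ m * x} a)
    (hb : IsLeast {m : ℕ | 1 / 2 < (3 : ℝ) ^ m * x} b) :
    |(a : ℝ) * Real.log 2 - (b : ℝ) * Real.log 3| < Real.log 3 := by
  have l2 : (0:ℝ) < Real.log 2 := Real.log_pos (by norm_num)
  have l3 : (0:ℝ) < Real.log 3 := Real.log_pos (by norm_num)
  have l23 : Real.log 2 < Real.log 3 := Real.log_lt_log (by norm_num) (by norm_num)
  rcases Nat.eq_zero_or_pos a with rfl | hapos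
  · have hx2 : (1:ℝ)/2 < x := by simpa using ha.1
    have hb0 : b = 0 := Nat.le_zero.mp (hb.2 (by simpa using hx2))
    subst hb0; simpa using l3
  rcases Nat.eq_zero_or_pos b with rfl | hbpos
  · have hx2 : (1:ℝ)/2 < x := by simpa using hb.1
    have : a = 0 := Nat.le_zero.mp (ha.2 (by simpa using hx2))
    omega
  obtain ⟨a', rfl⟩ : ∃ a', a = a'+1 := ⟨a-1, by omega⟩
  obtain ⟨b', rfl⟩ : ∃ b', b = b'+1 := ⟨b-1, by omega⟩
  have A1 : Real.log (1/2) - Real.log x < ((a':ℝ)+1) * Real.log 2 := by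
    have h := Real.log_lt_log (by norm_num) ha.1
    rw [Real.log_mul (by positivity) hx.ne', Real.log_pow] at h
    push_cast at h; linarith
  have A2 : (a' : ℝ) * Real.log 2 ≤ Real.log (1/2) - Real.log x := by
    have hna : a' ∉ {m : ℕ | 1 / 2 < (2 : ℝ) ^ m * x} := fun h => by
      have := ha.2 h; omega
    have h : (2:ℝ)^a' * x ≤ 1/2 := not_lt.mp hna
    have h2 := Real.log_le_log (by positivity) h
    rw [Real.log_mul (by positivity) hx.ne', Real.log_pow] at h2
    linarith
  have B1 : Real.log (1/2) - Real.log x < ((b':ℝ)+1) * Real.log 3 := by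
    have h := Real.log_lt_log (by norm_num) hb.1
    rw [Real.log_mul (by positivity) hx.ne', Real.log_pow] at h
    push_cast at h; linarith
  have B2 : (b' : ℝ) * Real.log 3 ≤ Real.log (1/2) - Real.log x := by
    have hnb : b' ∉ {m : ℕ | 1 / 2 < (3 : ℝ) ^ m * x} := fun h => by
      have := hb.2 h; omega
    have h : (3:ℝ)^b' * x ≤ 1/2 := not_lt.mp hnb
    have h2 := Real.log_le_log (by positivity) h
    rw [Real.log_mul (by positivity) hx.ne', Real.log_pow] at h2
    linarith
  rw [abs_lt]; push_cast
  constructor <;> nlinarith [A1, A2, B1, B2]
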